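/- arXiv:0812.1016 — 2 statements merged into one kernel-verified Lean document; each statement's English description precedes it below -/
import Mathlib

section
/- Let the process be φ-mixing. Then for every n ∈ ℕ and every n-cylinder A ∈ 𝒞^n with ℙ(A) > 0, ℙ_A(τ_A ∈ ℛ(A)) ≤ ε(A). -/
open MeasureTheory ProbabilityTheory Set Filter ENNReal

namespace ReturnTimes

variable {𝒞 : Type*}

/-- Bi-infinite sequences over the alphabet `𝒞`. -/
abbrev Omega (𝒞 : Type*) := ℤ → 𝒞

/-- The shift `T^k`: `(shiftk k x) m = x (m + k)`.  Thus `T = shiftk 1` and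
`T^{-k} A = shiftk k ⁻¹' A`. -/
def shiftk (k : ℤ) (x : Omega 𝒞) : Omega 𝒞 := fun m => x (m + k)

/-- Stationarity: `ℙ` is invariant under the shift. -/
def Stationary [MeasurableSpace 𝒞] (μ : MeasureTheory.Measure (Omega 𝒞)) : Prop :=
  ∀ S : Set (Omega 𝒞), μ (shiftk 1 ⁻¹' S) = μ S

/-- The `n`-cylinder `A = {X_0 = a_0, …, X_{n-1} = a_{n-1}}` given by the word `a`. -/
def cyl (n : ℕ) (a : ℕ → 𝒞) : Set (Omega 𝒞) := {x | ∀ i < n, x (i : ℤ) = a i}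

/-- `A^{(w)} = {X_{n-w} = a_{n-w}, …, X_{n-1} = a_{n-1}}`, the cylinder on the last `w`
symbols of the word `a` (equal to `univ` when `w = 0`). -/
def cylLast (n w : ℕ) (a : ℕ → 𝒞) : Set (Omega 𝒞) :=
  {x | ∀ i : ℕ, n - w ≤ i → i < n → x (i : ℤ) = a i}

/-- The event `{τ_A > t}` for a real `t`, where `τ_A(x) = inf {k ≥ 1 : T^k x ∈ A}`. -/
def tauGT (A : Set (Omega 𝒞)) (t : ℝ) : Set (Omega 𝒞) :=
  {x | ∀ k : ℕ, 1 ≤ k → (k : ℝ) ≤ t → shiftk (k : ℤ) x ∉ A}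

/-- The hitting time `τ_A(x) = inf {k ≥ 1 : T^k x ∈ A}`, with values in `ℕ∞`
(`⊤` if the point never hits `A`). -/
noncomputable def tau (A : Set (Omega 𝒞)) (x : Omega 𝒞) : ℕ∞ :=
  sInf {e : ℕ∞ | ∃ k : ℕ, e = (k : ℕ∞) ∧ 1 ≤ k ∧ shiftk (k : ℤ) x ∈ A}

/-- The period `p_A = min {k ∈ {1,…,n} : A ∩ T^{-k} A ≠ ∅}`. -/
noncomputable def period (n : ℕ) (A : Set (Omega 𝒞)) : ℕ :=
  sInf {k : ℕ | 1 ≤ k ∧ k ≤ n ∧ (A ∩ shiftk (k : ℤ) ⁻¹' A).Nonempty}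

/-- The secondary periods `ℛ(A) = {k ∈ {⌊n/p_A⌋ p_A + 1, …, n-1} : A ∩ T^{-k} A ≠ ∅}`. -/
noncomputable def secondary (n : ℕ) (A : Set (Omega 𝒞)) : Set ℕ :=
  {k : ℕ | (n / period n A) * period n A < k ∧ k < n ∧ (A ∩ shiftk (k : ℤ) ⁻¹' A).Nonempty}

open Classical in
/-- `n_A = min ℛ(A)` if `ℛ(A) ≠ ∅`, and `n_A = n` otherwise. -/
noncomputable def nA (n : ℕ) (A : Set (Omega 𝒞)) : ℕ :=
  if (secondary n A).Nonempty then sInf (secondary n A) else n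

/-- The σ-algebra `ℱ_I` generated by the coordinates with indices in `I`. -/
def coordAlg [MeasurableSpace 𝒞] (I : Set ℤ) : MeasurableSpace (Omega 𝒞) :=
  ⨆ i ∈ I, MeasurableSpace.comap (fun x : Omega 𝒞 => x i) inferInstance

/-- φ-mixing: `φ l` bounds `|ℙ_B(C) - ℙ(C)|` for all `B ∈ ℱ_{{0,…,n}}` with `ℙ(B) > 0`
and all `C ∈ ℱ_{{m : m ≥ n + l + 1}}`, and `φ l → 0` as `l → ∞`. -/
def IsPhiMixing [MeasurableSpace 𝒞] (μ : MeasureTheory.Measure (Omega 𝒞)) (φ : ℕ → ℝ) : Prop :=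
  Tendsto φ atTop (nhds 0) ∧
  ∀ (l n : ℕ) (B C : Set (Omega 𝒞)),
    MeasurableSet[coordAlg (Set.Icc (0 : ℤ) (n : ℤ))] B → 0 < μ B →
    MeasurableSet[coordAlg {i : ℤ | (n : ℤ) + (l : ℤ) + 1 ≤ i}] C →
    |(μ[|B] C).toReal - (μ C).toReal| ≤ φ l

/-- `ζ_A = ℙ_A(τ_A ≠ p_A)`. -/
noncomputable def zeta [MeasurableSpace 𝒞] (μ : MeasureTheory.Measure (Omega 𝒞)) (n : ℕ)
    (A : Set (Omega 𝒞)) : ℝ :=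
  (μ[|A] {x | tau A x ≠ (period n A : ℕ∞)}).toReal

/-- `ε(A) = inf_{0 ≤ w ≤ n_A} [(2n + p_A) ℙ(A^{(w)}) + φ(n_A - w)]`. -/
noncomputable def epsA [MeasurableSpace 𝒞] (μ : MeasureTheory.Measure (Omega 𝒞)) (φ : ℕ → ℝ)
    (n : ℕ) (a : ℕ → 𝒞) : ℝ :=
  (Finset.Iic (nA n (cyl n a))).inf' Finset.nonempty_Iic
    (fun w => ((2 * n + period n (cyl n a) : ℕ) : ℝ) * (μ (cylLast n w a)).toReal
       + φ (nA n (cyl n a) - w))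

/-- `f(A,t) = ℙ(A) t e^{-(ζ_A - 16 ε(A)) ℙ(A) t}`. -/
noncomputable def fAt [MeasurableSpace 𝒞] (μ : MeasureTheory.Measure (Omega 𝒞)) (φ : ℕ → ℝ)
    (n : ℕ) (a : ℕ → 𝒞) (t : ℝ) : ℝ :=
  (μ (cyl n a)).toReal * t *
    Real.exp (-(zeta μ n (cyl n a) - 16 * epsA μ φ n a) * (μ (cyl n a)).toReal * t)

/-- The sojourn time `S_A(x) = sup {k : x ∈ A ∩ T^{-j p_A} A for all j = 1,…,k}` (here `p`
stands for the period `p_A`), with values in `ℕ∞` and `S_A(x) = 0` when the set is empty. -/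
noncomputable def sojourn (p : ℕ) (A : Set (Omega 𝒞)) (x : Omega 𝒞) : ℕ∞ :=
  sSup {e : ℕ∞ | ∃ k : ℕ, e = (k : ℕ∞) ∧
    ∀ j : ℕ, 1 ≤ j → j ≤ k → x ∈ A ∩ shiftk ((j * p : ℕ) : ℤ) ⁻¹' A}

/-- `ρ_i(A) = ℙ(A | ∩_{j=1}^{i} T^{j p_A} A)` (here `p` stands for the period `p_A`;
note `T^{j} A = shiftk (-j) ⁻¹' A` since `T` is invertible). -/
noncomputable def rho [MeasurableSpace 𝒞] (μ : MeasureTheory.Measure (Omega 𝒞)) (p : ℕ)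
    (A : Set (Omega 𝒞)) (i : ℕ) : ℝ :=
  (μ[| ⋂ j ∈ Finset.Icc 1 i, shiftk (-((j * p : ℕ) : ℤ)) ⁻¹' A] A).toReal


section Atoms

variable [MeasurableSpace 𝒞]

def atomOf (c : 𝒞) : Set 𝒞 := ⋂₀ {S : Set 𝒞 | MeasurableSet S ∧ c ∈ S}

lemma self_mem_atomOf (c : 𝒞) : c ∈ atomOf c := fun _ hS => hS.2

lemma atomOf_subset {c : 𝒞} {S : Set 𝒞} (hS : MeasurableSet S) (hc : c ∈ S) :
    atomOf c ⊆ S := sInter_subset_of_mem ⟨hS, hc⟩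

lemma measurableSet_atomOf [Fintype 𝒞] (c : 𝒞) : MeasurableSet (atomOf c) :=
  MeasurableSet.sInter (Set.toFinite _).countable fun _ hS => hS.1

lemma mem_iff_of_atom {c d : 𝒞} {M : Set 𝒞} (hM : MeasurableSet M) (hd : d ∈ atomOf c) :
    c ∈ M ↔ d ∈ M := by
  constructor
  · exact fun h => atomOf_subset hM h hd
  · intro h
    by_contra hc
    exact atomOf_subset hM.compl hc hd h

lemma measurable_invariant {S : Set (Omega 𝒞)} (hS : MeasurableSet S) {x y : Omega 𝒞}
    (hxy : ∀ i, y i ∈ atomOf (x i)) : x ∈ S ↔ y ∈ S := by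
  let m' : MeasurableSpace (Omega 𝒞) :=
    { MeasurableSet' := fun T => ∀ u v : Omega 𝒞, (∀ i, v i ∈ atomOf (u i)) → (u ∈ T ↔ v ∈ T)
      measurableSet_empty := by intro u v _; simp
      measurableSet_compl := by
        intro T hT u v huv
        simp only [mem_compl_iff]
        exact not_congr (hT u v huv)
      measurableSet_iUnion := by
        intro f hf u v huv
        simp only [mem_iUnion]
        exact exists_congr fun i => hf i u v huv }
  have hle : (MeasurableSpace.pi : MeasurableSpace (Omega 𝒞)) ≤ m' := by
    rw [MeasurableSpace.pi]
    refine iSup_le fun i => ?_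
    rw [MeasurableSpace.le_def]
    rintro T ⟨M, hM, rfl⟩
    intro u v huv
    show u i ∈ M ↔ v i ∈ M
    exact mem_iff_of_atom hM (huv i)
  have hS' : MeasurableSpace.MeasurableSet' m' S := (MeasurableSpace.le_def.mp hle) S hS
  exact hS' x y hxy

def atomCyl (lo hi : ℕ) (a : ℕ → 𝒞) : Set (Omega 𝒞) :=
  {x | ∀ i : ℕ, lo ≤ i → i < hi → x (i : ℤ) ∈ atomOf (a i)}

lemma measure_eq_atomCyl (μ : Measure (Omega 𝒞)) (lo hi : ℕ) (a : ℕ → 𝒞) :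
    μ {x : Omega 𝒞 | ∀ i : ℕ, lo ≤ i → i < hi → x (i : ℤ) = a i} = μ (atomCyl lo hi a) := by
  set E : Set (Omega 𝒞) := {x | ∀ i : ℕ, lo ≤ i → i < hi → x (i : ℤ) = a i} with hE
  have hEB : E ⊆ atomCyl lo hi a := by
    intro x hx i h1 h2
    rw [hx i h1 h2]
    exact self_mem_atomOf _
  refine le_antisymm (measure_mono hEB) ?_
  rw [measure_eq_iInf E]
  refine le_iInf fun t => le_iInf fun hst => le_iInf fun ht => ?_
  refine measure_mono ?_
  intro y hy
  set x : Omega 𝒞 := fun m => if (lo : ℤ) ≤ m ∧ m < (hi : ℤ) then a m.toNat else y m with hxdef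
  have hxE : x ∈ E := by
    intro i h1 h2
    have hc : (lo : ℤ) ≤ (i : ℤ) ∧ (i : ℤ) < (hi : ℤ) := by omega
    simp only [hxdef, if_pos hc, Int.toNat_natCast]
  have hrel : ∀ i : ℤ, y i ∈ atomOf (x i) := by
    intro i
    by_cases h : (lo : ℤ) ≤ i ∧ i < (hi : ℤ)
    · have h0 : 0 ≤ i := le_trans (Int.natCast_nonneg lo) h.1
      have h1 : lo ≤ i.toNat := by omega
      have h2 : i.toNat < hi := by omega
      have := hy i.toNat h1 h2
      rw [Int.toNat_of_nonneg h0] at this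
      simpa only [hxdef, if_pos h] using this
    · simp only [hxdef, if_neg h]
      exact self_mem_atomOf _
  exact (measurable_invariant ht hrel).mp (hst hxE)

lemma measure_cyl_eq (μ : Measure (Omega 𝒞)) (n : ℕ) (a : ℕ → 𝒞) :
    μ (cyl n a) = μ (atomCyl 0 n a) := by
  have : cyl n a = {x : Omega 𝒞 | ∀ i : ℕ, 0 ≤ i → i < n → x (i : ℤ) = a i} := by
    ext x
    exact ⟨fun h i _ hi => h i hi, fun h i hi => h i (Nat.zero_le i) hi⟩
  rw [this, measure_eq_atomCyl]

lemma measure_cylLast_eq (μ : Measure (Omega 𝒞)) (n w : ℕ) (a : ℕ → 𝒞) :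
    μ (cylLast n w a) = μ (atomCyl (n - w) n a) :=
  measure_eq_atomCyl μ (n - w) n a

end Atoms

section Shift

variable [MeasurableSpace 𝒞] {μ : Measure (Omega 𝒞)}

lemma measure_shiftk_preimage (hstat : Stationary μ) (k : ℕ) (S : Set (Omega 𝒞)) :
    μ (shiftk (k : ℤ) ⁻¹' S) = μ S := by
  induction k with
  | zero =>
    have : shiftk (0 : ℤ) ⁻¹' S = S := by
      have h : shiftk (0 : ℤ) = (id : Omega 𝒞 → Omega 𝒞) := by
        funext x m; simp [shiftk]
      rw [h, preimage_id]
    rw [Nat.cast_zero, this]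
  | succ k ih =>
    have hcomp : shiftk ((k + 1 : ℕ) : ℤ) ⁻¹' S = shiftk 1 ⁻¹' (shiftk (k : ℤ) ⁻¹' S) := by
      ext x
      have h : shiftk (k : ℤ) (shiftk 1 x) = shiftk ((k + 1 : ℕ) : ℤ) x := by
        funext m; simp only [shiftk]; congr 1; push_cast; ring
      simp only [mem_preimage, h]
    rw [hcomp, hstat, ih]

end Shift

section Tau

lemma shift_mem_of_tau_eq {A : Set (Omega 𝒞)} {x : Omega 𝒞} {k : ℕ}
    (h : tau A x = (k : ℕ∞)) : shiftk (k : ℤ) x ∈ A := by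
  classical
  set S' : Set ℕ := {j | 1 ≤ j ∧ shiftk (j : ℤ) x ∈ A} with hS'
  have hSim : {e : ℕ∞ | ∃ j : ℕ, e = (j : ℕ∞) ∧ 1 ≤ j ∧ shiftk (j : ℤ) x ∈ A}
      = (fun j : ℕ => (j : ℕ∞)) '' S' := by
    ext e
    simp only [mem_setOf_eq, Set.mem_image, hS']
    constructor
    · rintro ⟨j, rfl, hj⟩; exact ⟨j, hj, rfl⟩
    · rintro ⟨j, hj, rfl⟩; exact ⟨j, rfl, hj⟩
  have hne : S'.Nonempty := by
    by_contra hemp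
    rw [not_nonempty_iff_eq_empty] at hemp
    have htop : tau A x = ⊤ := by
      rw [tau, hSim, hemp, image_empty, sInf_empty]
    rw [h] at htop
    exact (ENat.coe_ne_top k) htop
  have heq : tau A x = ((sInf S' : ℕ) : ℕ∞) := by
    rw [tau, hSim]
    apply le_antisymm
    · exact sInf_le ⟨sInf S', Nat.sInf_mem hne, rfl⟩
    · apply le_sInf
      rintro e ⟨j, hj, rfl⟩
      show ((sInf S' : ℕ) : ℕ∞) ≤ (j : ℕ∞)
      exact_mod_cast Nat.sInf_le hj
  rw [h] at heq
  have hk : k = sInf S' := by exact_mod_cast heq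
  rw [hk]
  exact (Nat.sInf_mem hne).2

end Tau

section CoordAlg

variable [MeasurableSpace 𝒞]

lemma measurableSet_coordAlg_preimage {I : Set ℤ} {i : ℤ} (hi : i ∈ I) {M : Set 𝒞}
    (hM : MeasurableSet M) :
    MeasurableSet[coordAlg I] ((fun x : Omega 𝒞 => x i) ⁻¹' M) := by
  have h1 : MeasurableSet[MeasurableSpace.comap (fun x : Omega 𝒞 => x i) inferInstance]
      ((fun x : Omega 𝒞 => x i) ⁻¹' M) := ⟨M, hM, rfl⟩
  have h2 : MeasurableSpace.comap (fun x : Omega 𝒞 => x i) inferInstance ≤ coordAlg I := by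
    rw [coordAlg]
    exact le_iSup₂ (f := fun (i : ℤ) (_ : i ∈ I) =>
      MeasurableSpace.comap (fun x : Omega 𝒞 => x i) inferInstance) i hi
  exact (MeasurableSpace.le_def.mp h2) _ h1

lemma coordAlg_le (I : Set ℤ) : coordAlg (𝒞 := 𝒞) I ≤ MeasurableSpace.pi := by
  rw [coordAlg]
  refine iSup₂_le fun i _ => ?_
  rw [MeasurableSpace.le_def]
  rintro T ⟨M, hM, rfl⟩
  show MeasurableSet ((fun x : Omega 𝒞 => x i) ⁻¹' M)
  exact measurable_pi_apply i hM

end CoordAlg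

/-- **Lemma (secondary returns are rare).**  `ℙ_A(τ_A ∈ ℛ(A)) ≤ ε(A)`. -/
theorem secondary_return_small [Fintype 𝒞] [Nonempty 𝒞] [MeasurableSpace 𝒞]
    (μ : MeasureTheory.Measure (Omega 𝒞)) [IsProbabilityMeasure μ] (hstat : Stationary μ)
    (φ : ℕ → ℝ) (hmix : IsPhiMixing μ φ)
    (n : ℕ) (hn : 1 ≤ n) (a : ℕ → 𝒞) (hA : 0 < μ (cyl n a)) :
    (μ[|cyl n a] {x | ∃ k ∈ secondary n (cyl n a), tau (cyl n a) x = (k : ℕ∞)}).toReal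
      ≤ epsA μ φ n a := by
  classical
  rw [epsA]
  refine Finset.le_inf' _ _ fun w hw => ?_
  rw [Finset.mem_Iic] at hw
  set A := cyl n a with hAdef
  set p := period n A with hp
  set m := nA n A with hm
  have hAA : μ A = μ (atomCyl 0 n a) := measure_cyl_eq μ n a
  have hmn : m ≤ n := by
    by_cases hR : (secondary n A).Nonempty
    · obtain ⟨k, hk⟩ := hR
      rw [hm, nA, if_pos ⟨k, hk⟩]
      exact le_of_lt (lt_of_le_of_lt (Nat.sInf_le hk) hk.2.1)
    · rw [hm, nA, if_neg hR]
  have hkmem : ∀ k ∈ secondary n A, m ≤ k ∧ k < n := by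
    intro k hk
    refine ⟨?_, hk.2.1⟩
    rw [hm, nA, if_pos ⟨k, hk⟩]
    exact Nat.sInf_le hk
  have hwn : w ≤ n := le_trans hw hmn
  set D := atomCyl (n - w) n a with hD
  set C := ⋃ k ∈ Finset.Ico m n, shiftk (k : ℤ) ⁻¹' D with hC
  -- the event is contained in C
  have hEC : {x : Omega 𝒞 | ∃ k ∈ secondary n A, tau A x = (k : ℕ∞)} ⊆ C := by
    rintro x ⟨k, hk, htau⟩
    have hkm := hkmem k hk
    have hxA : shiftk (k : ℤ) x ∈ A := shift_mem_of_tau_eq htau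
    rw [hAdef] at hxA
    rw [hC]
    refine mem_biUnion (Finset.mem_Ico.mpr ⟨hkm.1, hkm.2⟩) ?_
    show shiftk (k : ℤ) x ∈ D
    intro i h1 h2
    rw [hxA i h2]
    exact self_mem_atomOf _
  -- rewriting the shifted atom-cylinders as intersections of coordinate preimages
  have hDalt : ∀ k : ℕ, shiftk (k : ℤ) ⁻¹' D =
      ⋂ i ∈ Finset.Ico (n - w) n,
        (fun x : Omega 𝒞 => x ((i : ℤ) + (k : ℤ))) ⁻¹' atomOf (a i) := by
    intro k
    ext x
    simp only [mem_preimage, mem_iInter, Finset.mem_Ico, hD, atomCyl, mem_setOf_eq, shiftk]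
    constructor
    · intro h i hi; exact h i hi.1 hi.2
    · intro h i h1 h2; exact h i ⟨h1, h2⟩
  -- C is measurable for the far coordinates
  have hCcoord : MeasurableSet[coordAlg
      {i : ℤ | ((n - 1 : ℕ) : ℤ) + ((m - w : ℕ) : ℤ) + 1 ≤ i}] C := by
    rw [hC]
    refine Finset.measurableSet_biUnion _ fun k hk => ?_
    rw [hDalt k]
    refine Finset.measurableSet_biInter _ fun i hi => ?_
    rw [Finset.mem_Ico] at hi
    rw [Finset.mem_Ico] at hk
    refine measurableSet_coordAlg_preimage ?_ (measurableSet_atomOf _)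
    show ((n - 1 : ℕ) : ℤ) + ((m - w : ℕ) : ℤ) + 1 ≤ (i : ℤ) + (k : ℤ)
    omega
  have hCamb : MeasurableSet C :=
    (MeasurableSpace.le_def.mp (coordAlg_le _)) _ hCcoord
  -- the atom-hull of A is measurable for the first coordinates
  have hBcoord : MeasurableSet[coordAlg (Set.Icc (0 : ℤ) ((n - 1 : ℕ) : ℤ))]
      (atomCyl 0 n a) := by
    have halt : atomCyl 0 n a =
        ⋂ i ∈ Finset.range n, (fun x : Omega 𝒞 => x (i : ℤ)) ⁻¹' atomOf (a i) := by
      ext x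
      simp only [atomCyl, mem_setOf_eq, mem_iInter, Finset.mem_range, mem_preimage]
      exact ⟨fun h i hi => h i (Nat.zero_le i) hi, fun h i _ hi => h i hi⟩
    rw [halt]
    refine Finset.measurableSet_biInter _ fun i hi => ?_
    rw [Finset.mem_range] at hi
    refine measurableSet_coordAlg_preimage ?_ (measurableSet_atomOf _)
    show (i : ℤ) ∈ Set.Icc (0 : ℤ) ((n - 1 : ℕ) : ℤ)
    simp only [Set.mem_Icc]
    omega
  have hBpos : 0 < μ (atomCyl 0 n a) := hAA ▸ hA
  -- φ-mixing estimate
  have hmix2 := hmix.2 (m - w) (n - 1) (atomCyl 0 n a) C hBcoord hBpos hCcoord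
  have habs : (μ[|atomCyl 0 n a] C).toReal ≤ (μ C).toReal + φ (m - w) := by
    have h := (abs_le.mp hmix2).2
    linarith
  -- comparing the two conditional measures on C
  have hsubset : A ⊆ atomCyl 0 n a := by
    intro x hx i _ hi
    rw [hAdef] at hx
    rw [hx i hi]
    exact self_mem_atomOf _
  have h1 : μ[|A] C = (μ A)⁻¹ * μ (C ∩ A) := by
    rw [ProbabilityTheory.cond, Measure.smul_apply, Measure.restrict_apply hCamb, smul_eq_mul]
  have h2 : μ[|atomCyl 0 n a] C = (μ (atomCyl 0 n a))⁻¹ * μ (C ∩ atomCyl 0 n a) := by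
    rw [ProbabilityTheory.cond, Measure.smul_apply, Measure.restrict_apply hCamb, smul_eq_mul]
  have hcondA : μ[|A] C ≤ μ[|atomCyl 0 n a] C := by
    rw [h1, h2, hAA]
    exact mul_le_mul_right (measure_mono (inter_subset_inter_right C hsubset)) _
  have hne2 : μ[|atomCyl 0 n a] C ≠ ⊤ := by
    rw [h2]
    exact ENNReal.mul_ne_top (ENNReal.inv_ne_top.mpr (ne_of_gt hBpos)) (measure_ne_top μ _)
  have step1 : (μ[|A] {x : Omega 𝒞 | ∃ k ∈ secondary n A, tau A x = (k : ℕ∞)}).toReal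
      ≤ (μ[|A] C).toReal :=
    ENNReal.toReal_mono (ne_top_of_le_ne_top hne2 hcondA) (measure_mono hEC)
  have step2 : (μ[|A] C).toReal ≤ (μ[|atomCyl 0 n a] C).toReal :=
    ENNReal.toReal_mono hne2 hcondA
  -- bounding the measure of C
  have hCsum : μ C ≤ ((n - m : ℕ) : ℝ≥0∞) * μ (cylLast n w a) := by
    rw [hC]
    calc (μ (⋃ k ∈ Finset.Ico m n, shiftk (k : ℤ) ⁻¹' D))
        ≤ ∑ k ∈ Finset.Ico m n, μ (shiftk (k : ℤ) ⁻¹' D) :=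
          measure_biUnion_finset_le _ _
      _ = ∑ k ∈ Finset.Ico m n, μ (cylLast n w a) := by
          refine Finset.sum_congr rfl fun k _ => ?_
          rw [measure_shiftk_preimage hstat, hD, ← measure_cylLast_eq]
      _ = ((n - m : ℕ) : ℝ≥0∞) * μ (cylLast n w a) := by
          rw [Finset.sum_const, Nat.card_Ico, nsmul_eq_mul]
  have hcast : ((n - m : ℕ) : ℝ≥0∞) ≤ ((2 * n + p : ℕ) : ℝ≥0∞) :=
    Nat.cast_le.mpr (by omega)
  have h4 : (((2 * n + p : ℕ) : ℝ≥0∞) * μ (cylLast n w a)) ≠ ⊤ :=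
    ENNReal.mul_ne_top (ENNReal.natCast_ne_top _) (measure_ne_top μ _)
  have hfinal : (μ C).toReal ≤ ((2 * n + p : ℕ) : ℝ) * (μ (cylLast n w a)).toReal := by
    calc (μ C).toReal
        ≤ (((2 * n + p : ℕ) : ℝ≥0∞) * μ (cylLast n w a)).toReal :=
          ENNReal.toReal_mono h4 (le_trans hCsum (mul_le_mul_left hcast _))
      _ = ((2 * n + p : ℕ) : ℝ) * (μ (cylLast n w a)).toReal := by
          rw [ENNReal.toReal_mul, ENNReal.toReal_natCast]
  linarith

end ReturnTimes
end

section
/- Let the process be φ-mixing. Let n ∈ ℕ, let A ∈ 𝒞^n be an n-cylinder with ℙ(A) > 0, set f_A = 1/(2ℙ(A)), and let k ≥ 1 be an integer. Then for every real r with 0 ≤ r ≤ f_A, |ℙ_A(τ_A > k f_A + r) − ℙ_A(τ_A > k f_A) ℙ(τ_A > r)| ≤ 2 ε(A) ℙ_A(τ_A > k f_A − 2n). -/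
open MeasureTheory ProbabilityTheory Set Filter ENNReal

namespace ReturnTimes

variable {𝒞 : Type*}

-- ### basic shift lemmas

lemma shiftk_shiftk (a b : ℤ) (x : Omega 𝒞) : shiftk a (shiftk b x) = shiftk (a + b) x := by
  funext m; simp [shiftk, add_assoc]

lemma shiftk_apply (k : ℤ) (x : Omega 𝒞) (m : ℤ) : shiftk k x m = x (m + k) := rfl

lemma preimage_shiftk (a b : ℤ) (S : Set (Omega 𝒞)) :
    shiftk b ⁻¹' (shiftk a ⁻¹' S) = shiftk (a + b) ⁻¹' S := by
  ext x; simp only [Set.mem_preimage, shiftk_shiftk]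

lemma stat_preimage [MeasurableSpace 𝒞] {μ : MeasureTheory.Measure (Omega 𝒞)}
    (hstat : Stationary μ) (j : ℕ) (S : Set (Omega 𝒞)) :
    μ (shiftk (j : ℤ) ⁻¹' S) = μ S := by
  induction j with
  | zero =>
      congr 1
      ext x
      have : shiftk (0 : ℤ) x = x := by funext m; simp [shiftk]
      simp [Set.mem_preimage, this]
  | succ j ih =>
      have h1 : shiftk ((j + 1 : ℕ) : ℤ) ⁻¹' S = shiftk 1 ⁻¹' (shiftk (j : ℤ) ⁻¹' S) := by
        rw [preimage_shiftk]
        norm_num [add_comm]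
      rw [h1, hstat, ih]

-- ### φ ≥ 0

lemma phi_nonneg [MeasurableSpace 𝒞] {μ : MeasureTheory.Measure (Omega 𝒞)}
    [IsProbabilityMeasure μ] {φ : ℕ → ℝ} (hmix : IsPhiMixing μ φ) (l : ℕ) : 0 ≤ φ l := by
  have h := hmix.2 l 0 Set.univ ∅ MeasurableSet.univ (by simp) (@MeasurableSet.empty _ (coordAlg _))
  simpa using h

-- ### coordAlg measurability

lemma coordAlg_coord [MeasurableSpace 𝒞] {I : Set ℤ} {i : ℤ} (hi : i ∈ I) {S : Set 𝒞}
    (hS : MeasurableSet S) :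
    MeasurableSet[coordAlg (𝒞 := 𝒞) I] ((fun x : Omega 𝒞 => x i) ⁻¹' S) := by
  have hle : MeasurableSpace.comap (fun x : Omega 𝒞 => x i) inferInstance ≤ coordAlg I :=
    le_iSup₂ (f := fun i (_ : i ∈ I) =>
      MeasurableSpace.comap (fun x : Omega 𝒞 => x i) inferInstance) i hi
  exact hle _ ⟨S, hS, rfl⟩


-- ### representations

lemma shift_cyl_eq (n : ℕ) (a : ℕ → 𝒞) (j : ℕ) :
    shiftk (j : ℤ) ⁻¹' cyl n a
      = ⋂ i ∈ Finset.range n, (fun x : Omega 𝒞 => x ((i : ℤ) + j)) ⁻¹' {a i} := by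
  ext x
  simp only [Set.mem_preimage, cyl, Set.mem_setOf_eq, Set.mem_iInter, Finset.mem_range,
    Set.mem_singleton_iff]
  constructor
  · intro h i hi; exact h i hi
  · intro h i hi; exact h i hi

lemma shift_cylLast_eq (n w : ℕ) (a : ℕ → 𝒞) (j : ℕ) :
    shiftk (j : ℤ) ⁻¹' cylLast n w a
      = ⋂ i ∈ Finset.Ico (n - w) n, (fun x : Omega 𝒞 => x ((i : ℤ) + j)) ⁻¹' {a i} := by
  ext x
  simp only [Set.mem_preimage, cylLast, Set.mem_setOf_eq, Set.mem_iInter, Finset.mem_Ico,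
    Set.mem_singleton_iff]
  constructor
  · intro h i hi; exact h i hi.1 hi.2
  · intro h i h1 h2; exact h i ⟨h1, h2⟩

lemma cyl_subset_cylLast (n w : ℕ) (a : ℕ → 𝒞) : cyl n a ⊆ cylLast n w a :=
  fun x hx i _ hi => hx i hi

section Meas
variable [MeasurableSpace 𝒞]

lemma meas_shift_cyl {n : ℕ} {a : ℕ → 𝒞} (hsing : ∀ i < n, MeasurableSet ({a i} : Set 𝒞))
    (j : ℕ) : MeasurableSet (shiftk (j : ℤ) ⁻¹' cyl n a) := by
  rw [shift_cyl_eq]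
  exact Finset.measurableSet_biInter _ fun i hi =>
    (measurable_pi_apply _) (hsing i (Finset.mem_range.mp hi))

lemma meas_cyl {n : ℕ} {a : ℕ → 𝒞} (hsing : ∀ i < n, MeasurableSet ({a i} : Set 𝒞)) :
    MeasurableSet (cyl n a) := by
  have := meas_shift_cyl (𝒞 := 𝒞) hsing 0
  have h0 : shiftk ((0 : ℕ) : ℤ) ⁻¹' cyl n a = cyl n a := by
    ext x
    have hx0 : shiftk ((0:ℕ) : ℤ) x = x := by funext m; simp [shiftk]
    simp only [Set.mem_preimage]; rw [hx0]
  rwa [h0] at this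

lemma meas_shift_cylLast {n : ℕ} {a : ℕ → 𝒞} (hsing : ∀ i < n, MeasurableSet ({a i} : Set 𝒞))
    (w j : ℕ) : MeasurableSet (shiftk (j : ℤ) ⁻¹' cylLast n w a) := by
  rw [shift_cylLast_eq]
  exact Finset.measurableSet_biInter _ fun i hi =>
    (measurable_pi_apply _) (hsing i (Finset.mem_Ico.mp hi).2)

lemma meas_cylLast {n : ℕ} {a : ℕ → 𝒞} (hsing : ∀ i < n, MeasurableSet ({a i} : Set 𝒞))
    (w : ℕ) : MeasurableSet (cylLast n w a) := by
  have := meas_shift_cylLast (𝒞 := 𝒞) hsing w 0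
  have h0 : shiftk ((0 : ℕ) : ℤ) ⁻¹' cylLast n w a = cylLast n w a := by
    ext x
    have hx0 : shiftk ((0:ℕ) : ℤ) x = x := by funext m; simp [shiftk]
    simp only [Set.mem_preimage]; rw [hx0]
  rwa [h0] at this

lemma coordAlg_shift_cyl {n : ℕ} {a : ℕ → 𝒞} (hsing : ∀ i < n, MeasurableSet ({a i} : Set 𝒞))
    {I : Set ℤ} (j : ℕ) (hI : ∀ i < n, ((i : ℤ) + j) ∈ I) :
    MeasurableSet[coordAlg (𝒞 := 𝒞) I] (shiftk (j : ℤ) ⁻¹' cyl n a) := by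
  rw [shift_cyl_eq]
  refine MeasurableSet.biInter (Finset.range n).countable_toSet fun i hi => ?_
  have hi' : i < n := Finset.mem_range.mp (Finset.mem_coe.mp hi)
  exact coordAlg_coord (hI i hi') (hsing i hi')

lemma coordAlg_shift_cylLast {n w : ℕ} {a : ℕ → 𝒞}
    (hsing : ∀ i < n, MeasurableSet ({a i} : Set 𝒞))
    {I : Set ℤ} (j : ℕ) (hI : ∀ i, n - w ≤ i → i < n → ((i : ℤ) + j) ∈ I) :
    MeasurableSet[coordAlg (𝒞 := 𝒞) I] (shiftk (j : ℤ) ⁻¹' cylLast n w a) := by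
  rw [shift_cylLast_eq]
  refine MeasurableSet.biInter (Finset.Ico (n - w) n).countable_toSet fun i hi => ?_
  have h := Finset.mem_Ico.mp (Finset.mem_coe.mp hi)
  exact coordAlg_coord (hI i h.1 h.2) (hsing i h.2)

end Meas

-- ### "no hit" sets

def noHit (n : ℕ) (a : ℕ → 𝒞) (u v : ℕ) : Set (Omega 𝒞) :=
  ⋂ j ∈ Finset.Icc u v, (shiftk (j : ℤ) ⁻¹' cyl n a)ᶜ

lemma noHit_anti {n : ℕ} {a : ℕ → 𝒞} {u v v' : ℕ} (h : v' ≤ v) :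
    noHit n a u v ⊆ noHit n a u v' := by
  intro x hx
  simp only [noHit, Set.mem_iInter] at hx ⊢
  intro j hj
  have hj' := Finset.mem_Icc.mp hj
  exact hx j (Finset.mem_Icc.mpr ⟨hj'.1, hj'.2.trans h⟩)

lemma tauGT_eq_noHit (n : ℕ) (a : ℕ → 𝒞) {t : ℝ} (ht : 0 ≤ t) :
    tauGT (cyl n a) t = noHit n a 1 ⌊t⌋₊ := by
  ext x
  simp only [tauGT, Set.mem_setOf_eq, noHit, Set.mem_iInter, Finset.mem_Icc, Set.mem_compl_iff,
    Set.mem_preimage]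
  constructor
  · intro h j hj
    exact h j hj.1 ((Nat.le_floor_iff ht).mp hj.2)
  · intro h k hk hkt
    exact h k ⟨hk, Nat.le_floor hkt⟩

lemma tauGT_anti (A : Set (Omega 𝒞)) {s t : ℝ} (h : s ≤ t) : tauGT A t ⊆ tauGT A s := by
  intro x hx k h1 h2
  exact hx k h1 (h2.trans h)

section Meas2
variable [MeasurableSpace 𝒞]

lemma meas_noHit {n : ℕ} {a : ℕ → 𝒞} (hsing : ∀ i < n, MeasurableSet ({a i} : Set 𝒞))
    (u v : ℕ) : MeasurableSet (noHit n a u v) :=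
  Finset.measurableSet_biInter _ fun j _ => (meas_shift_cyl hsing j).compl

lemma coordAlg_noHit {n : ℕ} {a : ℕ → 𝒞} (hsing : ∀ i < n, MeasurableSet ({a i} : Set 𝒞))
    {I : Set ℤ} (u v : ℕ) (hI : ∀ i < n, ∀ j, u ≤ j → j ≤ v → ((i : ℤ) + j) ∈ I) :
    MeasurableSet[coordAlg (𝒞 := 𝒞) I] (noHit n a u v) := by
  refine MeasurableSet.biInter (Finset.Icc u v).countable_toSet fun j hj => ?_
  have hj' := Finset.mem_Icc.mp (Finset.mem_coe.mp hj)
  exact (coordAlg_shift_cyl hsing j fun i hi => hI i hi j hj'.1 hj'.2).compl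

end Meas2

-- shift of noHit
lemma noHit_shift (n : ℕ) (a : ℕ → 𝒞) (u v s : ℕ) (hu : 1 ≤ u) :
    noHit n a (u + s) (v + s) = shiftk (s : ℤ) ⁻¹' noHit n a u v := by
  ext x
  simp only [noHit, Set.mem_iInter, Set.mem_preimage, Set.mem_compl_iff, Finset.mem_Icc]
  constructor
  · intro h j hj
    have h1 := h (j + s) ⟨by omega, by omega⟩
    rw [shiftk_shiftk]
    have h2 : ((j : ℤ) + s) = ((j + s : ℕ) : ℤ) := by push_cast; ring
    rw [h2]; exact h1
  · intro h j hj
    have h1 := h (j - s) ⟨by omega, by omega⟩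
    rw [shiftk_shiftk] at h1
    have h2 : (((j - s : ℕ) : ℤ) + s) = (j : ℤ) := by omega
    rw [h2] at h1; exact h1



-- ### Case 1: a non-measurable symbol forces saturation

open Classical in
noncomputable def sw (a0 c' : 𝒞) : Omega 𝒞 → Omega 𝒞 := fun x j => if x j = a0 then c' else x j

section Case1
variable [MeasurableSpace 𝒞]

lemma sw_ne {a0 c' : 𝒞} (hne : c' ≠ a0) (x : Omega 𝒞) (j : ℤ) : sw a0 c' x j ≠ a0 := by
  unfold sw
  split_ifs with h
  · exact hne
  · exact h

lemma sw_eq_pos {a0 c' : 𝒞} {x : Omega 𝒞} {j : ℤ} (h : x j = a0) : sw a0 c' x j = c' := by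
  simp [sw, h]

lemma sw_eq_neg {a0 c' : 𝒞} {x : Omega 𝒞} {j : ℤ} (h : ¬ x j = a0) : sw a0 c' x j = x j := by
  simp [sw, h]

lemma atom_iff {a0 c' : 𝒞} (hatom : ∀ S : Set 𝒞, MeasurableSet S → a0 ∈ S → c' ∈ S)
    {S : Set 𝒞} (hS : MeasurableSet S) : a0 ∈ S ↔ c' ∈ S := by
  constructor
  · exact hatom S hS
  · intro hc
    by_contra h
    exact (hatom Sᶜ hS.compl h) hc

lemma sw_invariant {a0 c' : 𝒞} (hatom : ∀ S : Set 𝒞, MeasurableSet S → a0 ∈ S → c' ∈ S) :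
    ∀ T : Set (Omega 𝒞), MeasurableSet T → sw a0 c' ⁻¹' T = T := by
  let m0 : MeasurableSpace (Omega 𝒞) :=
    { MeasurableSet' := fun T => sw a0 c' ⁻¹' T = T
      measurableSet_empty := by simp
      measurableSet_compl := fun T hT => by
        simp only [Set.preimage_compl] at *
        rw [hT]
      measurableSet_iUnion := fun f hf => by
        simp only [Set.preimage_iUnion] at *
        simp_rw [hf] }
  have hle : (MeasurableSpace.pi : MeasurableSpace (Omega 𝒞)) ≤ m0 := by
    refine iSup_le fun j => ?_
    intro T hT
    obtain ⟨S, hS, rfl⟩ := hT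
    show sw a0 c' ⁻¹' ((fun x : Omega 𝒞 => x j) ⁻¹' S) = (fun x : Omega 𝒞 => x j) ⁻¹' S
    ext x
    simp only [Set.mem_preimage]
    by_cases hx : x j = a0
    · rw [sw_eq_pos hx, hx]
      exact (atom_iff hatom hS).symm
    · rw [sw_eq_neg (c' := c') hx]
  exact fun T hT => hle T hT

lemma sw_mem_tauGT {a0 c' : 𝒞} (hne : c' ≠ a0) {n : ℕ} {a : ℕ → 𝒞} {i0 : ℕ} (hi0 : i0 < n)
    (ha0 : a i0 = a0) (s : ℝ) (x : Omega 𝒞) : sw a0 c' x ∈ tauGT (cyl n a) s := by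
  intro k _ _ hmem
  have hv : sw a0 c' x ((i0 : ℤ) + k) = a i0 := hmem i0 hi0
  exact sw_ne hne x _ (hv.trans ha0)

lemma sat_superset {a0 c' : 𝒞} (hne : c' ≠ a0)
    (hatom : ∀ S : Set 𝒞, MeasurableSet S → a0 ∈ S → c' ∈ S)
    {n : ℕ} {a : ℕ → 𝒞} {i0 : ℕ} (hi0 : i0 < n) (ha0 : a i0 = a0)
    {s : ℝ} {T : Set (Omega 𝒞)} (hT : MeasurableSet T) (hsub : tauGT (cyl n a) s ⊆ T) :
    T = Set.univ := by
  apply Set.eq_univ_of_forall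
  intro x
  have h1 : sw a0 c' x ∈ T := hsub (sw_mem_tauGT hne hi0 ha0 s x)
  have h2 := sw_invariant hatom T hT
  rw [← h2]
  exact h1

lemma case1_mu {a0 c' : 𝒞} (hne : c' ≠ a0)
    (hatom : ∀ S : Set 𝒞, MeasurableSet S → a0 ∈ S → c' ∈ S)
    (μ : MeasureTheory.Measure (Omega 𝒞)) [IsProbabilityMeasure μ]
    {n : ℕ} {a : ℕ → 𝒞} {i0 : ℕ} (hi0 : i0 < n) (ha0 : a i0 = a0) (s : ℝ) :
    μ (tauGT (cyl n a) s) = 1 := by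
  refine le_antisymm prob_le_one ?_
  rw [measure_eq_iInf]
  refine le_iInf fun T => le_iInf fun hsub => le_iInf fun hm => ?_
  rw [sat_superset hne hatom hi0 ha0 hm hsub, measure_univ]

lemma case1_cond {a0 c' : 𝒞} (hne : c' ≠ a0)
    (hatom : ∀ S : Set 𝒞, MeasurableSet S → a0 ∈ S → c' ∈ S)
    (μ : MeasureTheory.Measure (Omega 𝒞)) [IsProbabilityMeasure μ]
    {n : ℕ} {a : ℕ → 𝒞} {i0 : ℕ} (hi0 : i0 < n) (ha0 : a i0 = a0)
    (h0 : μ (cyl n a) ≠ 0) (s : ℝ) :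
    μ[|cyl n a] (tauGT (cyl n a) s) = 1 := by
  show ((μ (cyl n a))⁻¹ • μ.restrict (cyl n a)) (tauGT (cyl n a) s) = 1
  rw [Measure.smul_apply, smul_eq_mul]
  have hres : μ.restrict (cyl n a) (tauGT (cyl n a) s) = μ (cyl n a) := by
    rw [measure_eq_iInf]
    apply le_antisymm
    · refine iInf_le_of_le Set.univ ?_
      refine iInf_le_of_le (Set.subset_univ _) ?_
      refine iInf_le_of_le MeasurableSet.univ ?_
      rw [Measure.restrict_apply_univ]
    · refine le_iInf fun T => le_iInf fun hsub => le_iInf fun hm => ?_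
      rw [sat_superset hne hatom hi0 ha0 hm hsub, Measure.restrict_apply_univ]
  rw [hres, ENNReal.inv_mul_cancel h0 (measure_ne_top μ _)]

end Case1



-- ### membership helpers for noHit

lemma mem_noHit {n : ℕ} {a : ℕ → 𝒞} {u v : ℕ} {x : Omega 𝒞} :
    x ∈ noHit n a u v ↔ ∀ j : ℕ, u ≤ j → j ≤ v → shiftk (j : ℤ) x ∉ cyl n a := by
  simp only [noHit, Set.mem_iInter, Finset.mem_Icc, Set.mem_compl_iff, Set.mem_preimage]
  constructor
  · intro h j h1 h2; exact h j ⟨h1, h2⟩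
  · intro h j hj; exact h j hj.1 hj.2

lemma not_mem_noHit {n : ℕ} {a : ℕ → 𝒞} {u v : ℕ} {x : Omega 𝒞} :
    x ∉ noHit n a u v ↔ ∃ j : ℕ, u ≤ j ∧ j ≤ v ∧ shiftk (j : ℤ) x ∈ cyl n a := by
  rw [mem_noHit]
  push_neg
  constructor
  · rintro ⟨j, h1, h2, h3⟩; exact ⟨j, h1, h2, h3⟩
  · rintro ⟨j, h1, h2, h3⟩; exact ⟨j, h1, h2, h3⟩

lemma compl_noHit (n : ℕ) (a : ℕ → 𝒞) (u v : ℕ) :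
    (noHit n a u v)ᶜ = ⋃ j ∈ Finset.Icc u v, shiftk (j : ℤ) ⁻¹' cyl n a := by
  ext x
  simp only [Set.mem_compl_iff, not_mem_noHit, Set.mem_iUnion, Finset.mem_Icc, Set.mem_preimage]
  constructor
  · rintro ⟨j, h1, h2, h3⟩; exact ⟨j, ⟨h1, h2⟩, h3⟩
  · rintro ⟨j, ⟨h1, h2⟩, h3⟩; exact ⟨j, h1, h2, h3⟩

-- ### union bounds

section MeasUnion
variable [MeasurableSpace 𝒞] {μ : MeasureTheory.Measure (Omega 𝒞)} [IsProbabilityMeasure μ]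

lemma measure_biUnion_shift_le (hstat : Stationary μ) (S : Set (Omega 𝒞)) (s : Finset ℕ) :
    μ (⋃ j ∈ s, shiftk (j : ℤ) ⁻¹' S) ≤ (s.card : ℝ≥0∞) * μ S := by
  calc μ (⋃ j ∈ s, shiftk (j : ℤ) ⁻¹' S) ≤ ∑ j ∈ s, μ (shiftk (j : ℤ) ⁻¹' S) :=
        measure_biUnion_finset_le s _
    _ = ∑ _j ∈ s, μ S := Finset.sum_congr rfl fun j _ => stat_preimage hstat j S
    _ = (s.card : ℝ≥0∞) * μ S := by rw [Finset.sum_const, nsmul_eq_mul]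

lemma measure_biUnion_shift_le_real (hstat : Stationary μ) (S : Set (Omega 𝒞)) (s : Finset ℕ) :
    (μ (⋃ j ∈ s, shiftk (j : ℤ) ⁻¹' S)).toReal ≤ (s.card : ℝ) * (μ S).toReal := by
  have h := measure_biUnion_shift_le hstat S s
  have hne : ((s.card : ℝ≥0∞) * μ S) ≠ ⊤ :=
    ENNReal.mul_ne_top (ENNReal.natCast_ne_top _) (measure_ne_top μ _)
  calc (μ (⋃ j ∈ s, shiftk (j : ℤ) ⁻¹' S)).toReal ≤ ((s.card : ℝ≥0∞) * μ S).toReal :=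
        ENNReal.toReal_mono hne h
    _ = (s.card : ℝ) * (μ S).toReal := by
        rw [ENNReal.toReal_mul]; simp

-- ### conditional measure helpers

lemma cond_toReal_eq {A : Set (Omega 𝒞)} (hA : MeasurableSet A) (S : Set (Omega 𝒞)) :
    (μ[|A] S).toReal = (μ (A ∩ S)).toReal / (μ A).toReal := by
  rw [cond_apply hA, ENNReal.toReal_mul, ENNReal.toReal_inv, div_eq_inv_mul]

lemma cond_mono_toReal {A : Set (Omega 𝒞)} (hA : MeasurableSet A) {S T : Set (Omega 𝒞)}
    (h : S ⊆ T) : (μ[|A] S).toReal ≤ (μ[|A] T).toReal := by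
  rw [cond_toReal_eq hA, cond_toReal_eq hA]
  have h1 : (μ (A ∩ S)).toReal ≤ (μ (A ∩ T)).toReal :=
    ENNReal.toReal_mono (measure_ne_top μ _) (measure_mono (Set.inter_subset_inter_right A h))
  gcongr

end MeasUnion



section Core
variable [MeasurableSpace 𝒞]

lemma coordAlg_cyl {n : ℕ} {a : ℕ → 𝒞} (hsing : ∀ i < n, MeasurableSet ({a i} : Set 𝒞))
    {I : Set ℤ} (hI : ∀ i < n, (i : ℤ) ∈ I) :
    MeasurableSet[coordAlg (𝒞 := 𝒞) I] (cyl n a) := by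
  have := coordAlg_shift_cyl (I := I) hsing 0 (fun i hi => by simpa using hI i hi)
  have h0 : shiftk ((0 : ℕ) : ℤ) ⁻¹' cyl n a = cyl n a := by
    ext x
    have hx0 : shiftk ((0:ℕ) : ℤ) x = x := by funext m; simp [shiftk]
    simp only [Set.mem_preimage]; rw [hx0]
  rwa [h0] at this

set_option maxHeartbeats 1000000 in
lemma core_est (μ : MeasureTheory.Measure (Omega 𝒞)) [IsProbabilityMeasure μ]
    (hstat : Stationary μ) (φ : ℕ → ℝ) (hmix : IsPhiMixing μ φ)
    (n : ℕ) (hn : 1 ≤ n) (a : ℕ → 𝒞)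
    (hsing : ∀ i < n, MeasurableSet ({a i} : Set 𝒞))
    (hA : 0 < μ (cyl n a))
    (w g m mr R : ℕ) (hwg : w + g ≤ n)
    (hm : 2 * n ≤ m) (hmr1 : m + R ≤ mr) (hmr2 : mr ≤ m + R + 1) :
    |(μ[|cyl n a] (noHit n a 1 mr)).toReal
        - (μ[|cyl n a] (noHit n a 1 m)).toReal * (μ (noHit n a 1 R)).toReal|
      ≤ 2 * (((n + g : ℕ) : ℝ) * (μ (cylLast n w a)).toReal + φ g)
          * (μ[|cyl n a] (noHit n a 1 (m - 2 * n))).toReal := by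
  have hAmeas : MeasurableSet (cyl n a) := meas_cyl hsing
  have hP0 : (0:ℝ) < (μ (cyl n a)).toReal := ENNReal.toReal_pos hA.ne' (measure_ne_top μ _)
  set P : ℝ := (μ (cyl n a)).toReal with hPdef
  set δ : ℝ := (μ (cylLast n w a)).toReal with hδdef
  have hδ0 : (0:ℝ) ≤ δ := ENNReal.toReal_nonneg
  have hφg : 0 ≤ φ g := phi_nonneg hmix g
  set G : ℕ := n + g with hGdef
  set m2 : ℕ := m - 2 * n with hm2def
  set Mv : ℝ := (μ[|cyl n a] (noHit n a 1 m2)).toReal with hMvdef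
  set bv : ℝ := (μ[|cyl n a] (noHit n a 1 m)).toReal with hbvdef
  set av : ℝ := (μ[|cyl n a] (noHit n a 1 mr)).toReal with havdef
  set cv : ℝ := (μ (noHit n a 1 R)).toReal with hcvdef
  have hMv0 : 0 ≤ Mv := ENNReal.toReal_nonneg
  have hcv0 : 0 ≤ cv := ENNReal.toReal_nonneg
  have hcv1 : cv ≤ 1 := by
    have := ENNReal.toReal_mono (by simp) (prob_le_one (μ := μ) (s := noHit n a 1 R))
    simpa using this
  have hsub_m2 : noHit n a 1 m ⊆ noHit n a 1 m2 := noHit_anti (by omega)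
  have hb_le_M : bv ≤ Mv := cond_mono_toReal hAmeas hsub_m2
  have hsub_mr : noHit n a 1 mr ⊆ noHit n a 1 m := noHit_anti (by omega)
  have ha_le_b : av ≤ bv := cond_mono_toReal hAmeas hsub_mr
  have hav0 : 0 ≤ av := ENNReal.toReal_nonneg
  have hbv0 : 0 ≤ bv := ENNReal.toReal_nonneg
  have hPδ : P ≤ δ :=
    ENNReal.toReal_mono (measure_ne_top μ _) (measure_mono (cyl_subset_cylLast n w a))
  -- trivial case: conditioned trajectory never survives to time m
  by_cases hb0 : μ (cyl n a ∩ noHit n a 1 m) = 0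
  · have hbv' : bv = 0 := by
      rw [hbvdef, cond_toReal_eq hAmeas, hb0]; simp
    have hav' : av = 0 := by
      have : μ (cyl n a ∩ noHit n a 1 mr) = 0 :=
        le_antisymm (le_trans (measure_mono (Set.inter_subset_inter_right _ hsub_mr))
          (le_of_eq hb0)) (zero_le)
      rw [havdef, cond_toReal_eq hAmeas, this]; simp
    rw [hav', hbv']
    simp only [zero_mul, sub_zero, abs_zero]
    have h1 : (0:ℝ) ≤ ((n + g : ℕ) : ℝ) * δ + φ g := by positivity
    positivity
  have hb0' : 0 < μ (cyl n a ∩ noHit n a 1 m) := zero_lt_iff.mpr hb0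
  have hB2pos : 0 < μ (cyl n a ∩ noHit n a 1 m2) :=
    lt_of_lt_of_le hb0' (measure_mono (Set.inter_subset_inter_right _ hsub_m2))
  have hB2meas : MeasurableSet (cyl n a ∩ noHit n a 1 m2) :=
    hAmeas.inter (meas_noHit hsing 1 m2)
  have hBmeas : MeasurableSet (cyl n a ∩ noHit n a 1 m) :=
    hAmeas.inter (meas_noHit hsing 1 m)
  -- the strip union
  set Cstrip : Set (Omega 𝒞) :=
    ⋃ j ∈ Finset.Icc (m+1) (m+G), shiftk (j : ℤ) ⁻¹' cylLast n w a with hCdef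
  have hCstripMeas : MeasurableSet Cstrip :=
    Finset.measurableSet_biUnion _ fun j _ => meas_shift_cylLast hsing w j
  have hμC : (μ Cstrip).toReal ≤ (G : ℝ) * δ := by
    have := measure_biUnion_shift_le_real hstat (cylLast n w a) (Finset.Icc (m+1) (m+G))
    rw [Nat.card_Icc] at this
    have hcard : (m + G + 1 - (m + 1)) = G := by omega
    rw [hcard] at this
    exact this
  -- Step E via mixing
  have hcondB2 : ∀ S : Set (Omega 𝒞),
      (μ (cyl n a ∩ noHit n a 1 m2 ∩ S)).toReal
        = (μ (cyl n a ∩ noHit n a 1 m2)).toReal * (μ[|cyl n a ∩ noHit n a 1 m2] S).toReal := by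
    intro S
    rw [cond_toReal_eq hB2meas]
    have hpos : (0:ℝ) < (μ (cyl n a ∩ noHit n a 1 m2)).toReal :=
      ENNReal.toReal_pos hB2pos.ne' (measure_ne_top μ _)
    field_simp
  have hmixE : |(μ[|cyl n a ∩ noHit n a 1 m2] Cstrip).toReal - (μ Cstrip).toReal| ≤ φ g := by
    apply hmix.2 g (m - n - 1) _ _ ?_ hB2pos ?_
    · apply MeasurableSet.inter
      · exact coordAlg_cyl hsing (fun i hi => by
          simp only [Set.mem_Icc]; constructor <;> [positivity; omega])
      · exact coordAlg_noHit hsing 1 m2 (fun i hi j hj1 hj2 => by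
          simp only [Set.mem_Icc]; constructor <;> [positivity; omega])
    · refine MeasurableSet.biUnion (Finset.Icc (m+1) (m+G)).countable_toSet fun j hj => ?_
      have hj' := Finset.mem_Icc.mp (Finset.mem_coe.mp hj)
      refine coordAlg_shift_cylLast hsing j fun i hi1 hi2 => ?_
      simp only [Set.mem_setOf_eq]
      omega
  have hE : (μ[|cyl n a] (noHit n a 1 m2 ∩ Cstrip)).toReal ≤ Mv * ((G:ℝ) * δ + φ g) := by
    rw [cond_toReal_eq hAmeas, ← Set.inter_assoc, hcondB2]
    have h1 : (μ[|cyl n a ∩ noHit n a 1 m2] Cstrip).toReal ≤ (G:ℝ) * δ + φ g := by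
      have := abs_le.mp hmixE
      linarith [this.2]
    have hMveq : Mv = (μ (cyl n a ∩ noHit n a 1 m2)).toReal / P := by
      rw [hMvdef, cond_toReal_eq hAmeas]
    have hX0 : (0:ℝ) ≤ (μ (cyl n a ∩ noHit n a 1 m2)).toReal := ENNReal.toReal_nonneg
    calc (μ (cyl n a ∩ noHit n a 1 m2)).toReal
          * (μ[|cyl n a ∩ noHit n a 1 m2] Cstrip).toReal / (μ (cyl n a)).toReal
        ≤ (μ (cyl n a ∩ noHit n a 1 m2)).toReal * ((G:ℝ) * δ + φ g) / (μ (cyl n a)).toReal := by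
          gcongr
      _ = Mv * ((G:ℝ) * δ + φ g) := by rw [hMveq]; ring
  -- difference helper
  have hdiff : ∀ X Y : Set (Omega 𝒞), MeasurableSet Y → Y ⊆ X →
      ((cyl n a ∩ X) \ Y ⊆ cyl n a ∩ (noHit n a 1 m2 ∩ Cstrip)) →
      (μ[|cyl n a] X).toReal - (μ[|cyl n a] Y).toReal ≤ Mv * ((G:ℝ) * δ + φ g) := by
    intro X Y hY hYX hZ
    have h1 : μ (cyl n a ∩ X ∩ Y) + μ ((cyl n a ∩ X) \ Y) = μ (cyl n a ∩ X) :=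
      measure_inter_add_diff _ hY
    have h2 : cyl n a ∩ X ∩ Y = cyl n a ∩ Y := by
      rw [Set.inter_assoc, Set.inter_eq_right.mpr hYX]
    rw [h2] at h1
    have h3 : (μ (cyl n a ∩ X)).toReal
        = (μ (cyl n a ∩ Y)).toReal + (μ ((cyl n a ∩ X) \ Y)).toReal := by
      rw [← ENNReal.toReal_add (measure_ne_top μ _) (measure_ne_top μ _), h1]
    have h4 : (μ ((cyl n a ∩ X) \ Y)).toReal
        ≤ (μ (cyl n a ∩ (noHit n a 1 m2 ∩ Cstrip))).toReal :=
      ENNReal.toReal_mono (measure_ne_top μ _) (measure_mono hZ)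
    rw [cond_toReal_eq hAmeas X, cond_toReal_eq hAmeas Y]
    have h5 : (μ (cyl n a ∩ X)).toReal / P - (μ (cyl n a ∩ Y)).toReal / P
        = (μ ((cyl n a ∩ X) \ Y)).toReal / P := by
      rw [h3]; ring
    rw [h5]
    calc (μ ((cyl n a ∩ X) \ Y)).toReal / P
        ≤ (μ (cyl n a ∩ (noHit n a 1 m2 ∩ Cstrip))).toReal / P := by gcongr
      _ = (μ[|cyl n a] (noHit n a 1 m2 ∩ Cstrip)).toReal := (cond_toReal_eq hAmeas _).symm
      _ ≤ Mv * ((G:ℝ) * δ + φ g) := hE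
  have hexp : 2 * (((G:ℕ):ℝ) * δ + φ g) * Mv
      = 2 * (Mv * ((G:ℝ) * δ)) + 2 * (Mv * φ g) := by ring
  have hMGδ : (0:ℝ) ≤ Mv * ((G:ℝ) * δ) := by positivity
  have hMφ : (0:ℝ) ≤ Mv * φ g := mul_nonneg hMv0 hφg
  by_cases hsplit : mr ≤ m + G
  · -- short case
    have hba : bv - av ≤ Mv * ((G:ℝ) * δ + φ g) := by
      refine hdiff (noHit n a 1 m) (noHit n a 1 mr) (meas_noHit hsing 1 mr) hsub_mr ?_
      rintro x ⟨⟨hxA, hxm⟩, hxnot⟩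
      obtain ⟨j, hj1, hjmr, hjhit⟩ := not_mem_noHit.mp hxnot
      have hjm : ¬ j ≤ m := fun h => (mem_noHit.mp hxm j hj1 h) hjhit
      refine ⟨hxA, hsub_m2 hxm, ?_⟩
      exact Set.mem_biUnion (Finset.mem_coe.mpr (Finset.mem_Icc.mpr ⟨by omega, by omega⟩))
        (cyl_subset_cylLast n w a hjhit)
    have hcompl : (μ (noHit n a 1 R)ᶜ).toReal ≤ (R:ℝ) * P := by
      rw [compl_noHit]
      have := measure_biUnion_shift_le_real hstat (cyl n a) (Finset.Icc 1 R)
      rw [Nat.card_Icc] at this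
      have hcard : (R + 1 - 1) = R := by omega
      rwa [hcard] at this
    have h1mc : 1 - cv ≤ (R:ℝ) * P := by
      have hsum := measure_add_measure_compl (μ := μ) (meas_noHit hsing 1 R)
      have : cv + (μ (noHit n a 1 R)ᶜ).toReal = 1 := by
        rw [hcvdef, ← ENNReal.toReal_add (measure_ne_top μ _) (measure_ne_top μ _), hsum]
        simp
      linarith
    have hRG : (R:ℝ) ≤ (G:ℝ) := by
      have : R ≤ G := by omega
      exact_mod_cast this
    have hRPGδ : (R:ℝ) * P ≤ (G:ℝ) * δ :=
      mul_le_mul hRG hPδ (le_of_lt hP0) (by positivity)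
    have hbc : bv * (1 - cv) ≤ Mv * ((R:ℝ) * P) :=
      mul_le_mul hb_le_M h1mc (by linarith) hMv0
    have hbvcv : bv * cv ≤ bv := mul_le_of_le_one_right hbv0 hcv1
    have hMRP : Mv * ((R:ℝ)*P) ≤ Mv * ((G:ℝ)*δ) := by
      apply mul_le_mul_of_nonneg_left hRPGδ hMv0
    have hexpand : Mv * ((G:ℝ) * δ + φ g) = Mv * ((G:ℝ) * δ) + Mv * φ g := by ring
    have hbb : bv * (1 - cv) = bv - bv * cv := by ring
    rw [abs_le]
    constructor
    · linarith [hba, hbvcv, hexp, hexpand, hMGδ, hMφ]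
    · linarith [hba, hbc, hMRP, hexp, hexpand, hMGδ, hMφ, hbb, ha_le_b]
  · -- long case
    push_neg at hsplit
    set C' : Set (Omega 𝒞) := noHit n a (m+G+1) mr with hC'def
    have hC'meas : MeasurableSet C' := meas_noHit hsing _ _
    set a'v : ℝ := (μ[|cyl n a] (noHit n a 1 m ∩ C')).toReal with ha'def
    have hsub1 : noHit n a 1 mr ⊆ noHit n a 1 m ∩ C' := by
      intro x hx
      refine ⟨hsub_mr hx, mem_noHit.mpr fun j h1 h2 => mem_noHit.mp hx j (by omega) h2⟩
    have hav_le : av ≤ a'v := cond_mono_toReal hAmeas hsub1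
    have ha'a : a'v - av ≤ Mv * ((G:ℝ) * δ + φ g) := by
      refine hdiff (noHit n a 1 m ∩ C') (noHit n a 1 mr) (meas_noHit hsing 1 mr) hsub1 ?_
      rintro x ⟨⟨hxA, hxm, hxC⟩, hxnot⟩
      obtain ⟨j, hj1, hjmr, hjhit⟩ := not_mem_noHit.mp hxnot
      have hjm : ¬ j ≤ m := fun h => (mem_noHit.mp hxm j hj1 h) hjhit
      have hjC : ¬ (m + G + 1 ≤ j) := fun h => (mem_noHit.mp hxC j h hjmr) hjhit
      refine ⟨hxA, hsub_m2 hxm, ?_⟩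
      exact Set.mem_biUnion (Finset.mem_coe.mpr (Finset.mem_Icc.mpr ⟨by omega, by omega⟩))
        (cyl_subset_cylLast n w a hjhit)
    have hmixM : |(μ[|cyl n a ∩ noHit n a 1 m] C').toReal - (μ C').toReal| ≤ φ g := by
      apply hmix.2 g (m + n - 1) _ _ ?_ hb0' ?_
      · apply MeasurableSet.inter
        · exact coordAlg_cyl hsing (fun i hi => by
            simp only [Set.mem_Icc]; constructor <;> [positivity; omega])
        · exact coordAlg_noHit hsing 1 m (fun i hi j hj1 hj2 => by
            simp only [Set.mem_Icc]; constructor <;> [positivity; omega])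
      · exact coordAlg_noHit hsing (m+G+1) mr (fun i hi j hj1 hj2 => by
          simp only [Set.mem_setOf_eq]; omega)
    have hcondB : (μ (cyl n a ∩ noHit n a 1 m ∩ C')).toReal
        = (μ (cyl n a ∩ noHit n a 1 m)).toReal
            * (μ[|cyl n a ∩ noHit n a 1 m] C').toReal := by
      rw [cond_toReal_eq hBmeas]
      have hpos : (0:ℝ) < (μ (cyl n a ∩ noHit n a 1 m)).toReal :=
        ENNReal.toReal_pos hb0'.ne' (measure_ne_top μ _)
      field_simp
    have ha'eq : a'v = bv * (μ[|cyl n a ∩ noHit n a 1 m] C').toReal := by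
      rw [ha'def, cond_toReal_eq hAmeas, ← Set.inter_assoc, hcondB, hbvdef,
        cond_toReal_eq hAmeas]
      ring
    set R' : ℕ := mr - (m + G) with hR'def
    have hC'val : (μ C').toReal = (μ (noHit n a 1 R')).toReal := by
      have h1 : m + G + 1 = 1 + (m+G) := by omega
      have h2 : mr = R' + (m+G) := by omega
      have heq : C' = shiftk (((m+G : ℕ)):ℤ) ⁻¹' noHit n a 1 R' := by
        rw [hC'def, h1, h2, noHit_shift n a 1 R' (m+G) le_rfl]
      rw [heq, stat_preimage hstat]
    set cv' : ℝ := (μ (noHit n a 1 R')).toReal with hcv'def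
    have hR'R : R' ≤ R := by omega
    have hcvle : cv ≤ cv' := by
      rw [hcvdef, hcv'def]
      exact ENNReal.toReal_mono (measure_ne_top μ _) (measure_mono (noHit_anti hR'R))
    have hdiffcv : cv' - cv ≤ (G:ℝ) * P := by
      have h1 : μ (noHit n a 1 R' ∩ noHit n a 1 R) + μ (noHit n a 1 R' \ noHit n a 1 R)
          = μ (noHit n a 1 R') := measure_inter_add_diff _ (meas_noHit hsing 1 R)
      have h2 : noHit n a 1 R' ∩ noHit n a 1 R = noHit n a 1 R :=
        Set.inter_eq_right.mpr (noHit_anti hR'R)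
      rw [h2] at h1
      have h3 : cv' = cv + (μ (noHit n a 1 R' \ noHit n a 1 R)).toReal := by
        rw [hcv'def, hcvdef, ← ENNReal.toReal_add (measure_ne_top μ _) (measure_ne_top μ _), h1]
      have h4 : noHit n a 1 R' \ noHit n a 1 R
          ⊆ ⋃ j ∈ Finset.Icc (R'+1) R, shiftk (j:ℤ) ⁻¹' cyl n a := by
        rintro x ⟨hx1, hx2⟩
        obtain ⟨j, hj1, hjR, hjhit⟩ := not_mem_noHit.mp hx2
        have hjR' : ¬ j ≤ R' := fun h => (mem_noHit.mp hx1 j hj1 h) hjhit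
        exact Set.mem_biUnion (Finset.mem_coe.mpr (Finset.mem_Icc.mpr ⟨by omega, by omega⟩))
          hjhit
      have h5 : (μ (noHit n a 1 R' \ noHit n a 1 R)).toReal ≤ ((R - R' : ℕ):ℝ) * P := by
        have h6 := measure_biUnion_shift_le_real hstat (cyl n a) (Finset.Icc (R'+1) R)
        rw [Nat.card_Icc] at h6
        have hcard : (R + 1 - (R' + 1)) = R - R' := by omega
        rw [hcard] at h6
        exact le_trans (ENNReal.toReal_mono (measure_ne_top μ _) (measure_mono h4)) h6
      have h7 : ((R - R' : ℕ):ℝ) ≤ (G:ℝ) := by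
        have : R - R' ≤ G := by omega
        exact_mod_cast this
      have h8 : ((R - R' : ℕ):ℝ) * P ≤ (G:ℝ) * P := by
        apply mul_le_mul_of_nonneg_right h7 (le_of_lt hP0)
      linarith
    have hGPδ : (G:ℝ) * P ≤ (G:ℝ) * δ := by
      apply mul_le_mul_of_nonneg_left hPδ (by positivity)
    have hmixM' : |(μ[|cyl n a ∩ noHit n a 1 m] C').toReal - cv'| ≤ φ g := by
      rw [← hC'val]; exact hmixM
    have h2' : |a'v - bv * cv'| ≤ bv * φ g := by
      rw [ha'eq, ← mul_sub, abs_mul, abs_of_nonneg hbv0]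
      exact mul_le_mul_of_nonneg_left hmixM' hbv0
    have hbφ : bv * φ g ≤ Mv * φ g := mul_le_mul_of_nonneg_right hb_le_M hφg
    have hbcc : bv * cv' - bv * cv ≤ Mv * ((G:ℝ) * δ) := by
      have : bv * (cv' - cv) ≤ Mv * ((G:ℝ) * P) :=
        mul_le_mul hb_le_M hdiffcv (by linarith) hMv0
      nlinarith [mul_le_mul_of_nonneg_left hGPδ hMv0]
    have htri : |av - bv * cv| ≤ |av - a'v| + |a'v - bv * cv'| + |bv * cv' - bv * cv| := by
      calc |av - bv * cv| ≤ |av - a'v| + |a'v - bv * cv| := abs_sub_le _ _ _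
        _ ≤ |av - a'v| + (|a'v - bv * cv'| + |bv * cv' - bv * cv|) := by
            have := abs_sub_le a'v (bv * cv') (bv * cv)
            linarith
        _ = |av - a'v| + |a'v - bv * cv'| + |bv * cv' - bv * cv| := by ring
    have habs1 : |av - a'v| = a'v - av := by
      rw [abs_sub_comm]; exact abs_of_nonneg (by linarith)
    have habs3 : |bv * cv' - bv * cv| = bv * cv' - bv * cv := by
      apply abs_of_nonneg
      have : bv * cv ≤ bv * cv' := mul_le_mul_of_nonneg_left hcvle hbv0
      linarith
    rw [habs1, habs3] at htri
    have hfin : a'v - av + |a'v - bv * cv'| + (bv * cv' - bv * cv)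
        ≤ 2 * (((G:ℕ):ℝ) * δ + φ g) * Mv := by
      rw [hexp]
      have e1 : a'v - av ≤ Mv * ((G:ℝ) * δ) + Mv * φ g := by
        have : Mv * ((G:ℝ) * δ + φ g) = Mv * ((G:ℝ) * δ) + Mv * φ g := by ring
        linarith [ha'a]
      linarith [le_trans h2' hbφ, hbcc]
    linarith

end Core


lemma nA_le_n {n : ℕ} (hn : 1 ≤ n) (A : Set (Omega 𝒞)) : nA n A ≤ n := by
  unfold nA
  split_ifs with h
  · obtain ⟨k, hk⟩ := h
    exact le_trans (Nat.sInf_le hk) (le_of_lt hk.2.1)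
  · exact le_rfl


set_option maxHeartbeats 1000000 in
/-- **Proposition (a).**  With `f_A = 1/(2ℙ(A))`: for every integer `k ≥ 1` and
`0 ≤ r ≤ f_A`,
`|ℙ_A(τ_A > k f_A + r) - ℙ_A(τ_A > k f_A) ℙ(τ_A > r)| ≤ 2 ε(A) ℙ_A(τ_A > k f_A - 2n)`. -/
theorem hitting_return_factorization [Fintype 𝒞] [Nonempty 𝒞] [MeasurableSpace 𝒞]
    (μ : MeasureTheory.Measure (Omega 𝒞)) [IsProbabilityMeasure μ] (hstat : Stationary μ)
    (φ : ℕ → ℝ) (hmix : IsPhiMixing μ φ)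
    (n : ℕ) (hn : 1 ≤ n) (a : ℕ → 𝒞) (hA : 0 < μ (cyl n a))
    (k : ℕ) (hk : 1 ≤ k) (fA : ℝ) (hfA : fA = 1 / (2 * (μ (cyl n a)).toReal))
    (r : ℝ) (hr0 : 0 ≤ r) (hr : r ≤ fA) :
    |(μ[|cyl n a] (tauGT (cyl n a) ((k : ℝ) * fA + r))).toReal
        - (μ[|cyl n a] (tauGT (cyl n a) ((k : ℝ) * fA))).toReal
            * (μ (tauGT (cyl n a) r)).toReal|
      ≤ 2 * epsA μ φ n a
          * (μ[|cyl n a] (tauGT (cyl n a) ((k : ℝ) * fA - 2 * n))).toReal := by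
  have hφ0 : ∀ l, 0 ≤ φ l := phi_nonneg hmix
  -- ε(A) is attained and nonnegative
  obtain ⟨w0, hw0mem, hw0eq⟩ := Finset.exists_mem_eq_inf' (Finset.nonempty_Iic
    (a := nA n (cyl n a)))
    (fun w => ((2 * n + period n (cyl n a) : ℕ) : ℝ) * (μ (cylLast n w a)).toReal
       + φ (nA n (cyl n a) - w))
  have hw0 : w0 ≤ nA n (cyl n a) := Finset.mem_Iic.mp hw0mem
  have heps : epsA μ φ n a
      = ((2 * n + period n (cyl n a) : ℕ) : ℝ) * (μ (cylLast n w0 a)).toReal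
          + φ (nA n (cyl n a) - w0) := hw0eq
  have hδ0 : (0:ℝ) ≤ (μ (cylLast n w0 a)).toReal := ENNReal.toReal_nonneg
  have hM0 : (0:ℝ) ≤ (μ[|cyl n a] (tauGT (cyl n a) ((k : ℝ) * fA - 2 * n))).toReal :=
    ENNReal.toReal_nonneg
  have heps0 : 0 ≤ epsA μ φ n a := by
    rw [heps]
    exact add_nonneg (by positivity) (hφ0 _)
  by_cases hsing : ∀ i < n, MeasurableSet ({a i} : Set 𝒞)
  swap
  · -- Case 1: some symbol is not measurable; everything saturates
    push_neg at hsing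
    obtain ⟨i0, hi0, hnm⟩ := hsing
    -- the measurable atom of `a i0` contains a second point
    set atom : Set 𝒞 := ⋂₀ {S : Set 𝒞 | MeasurableSet S ∧ a i0 ∈ S} with hatomdef
    have hatom_meas : MeasurableSet atom := by
      apply Set.Finite.measurableSet_sInter (Set.toFinite _)
      exact fun S hS => hS.1
    have hmem_atom : a i0 ∈ atom := by
      intro S hS; exact hS.2
    have hax : ∃ c', c' ∈ atom ∧ c' ≠ a i0 := by
      by_contra hcon
      push_neg at hcon
      have : atom = {a i0} := by
        apply Set.eq_singleton_iff_unique_mem.mpr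
        exact ⟨hmem_atom, fun c hc => hcon c hc⟩
      exact hnm (this ▸ hatom_meas)
    obtain ⟨c', hc'atom, hc'ne⟩ := hax
    have hatomP : ∀ S : Set 𝒞, MeasurableSet S → a i0 ∈ S → c' ∈ S := by
      intro S hS ha
      exact hc'atom S ⟨hS, ha⟩
    have h1 := case1_cond hc'ne hatomP μ hi0 rfl hA.ne' ((k : ℝ) * fA + r)
    have h2 := case1_cond hc'ne hatomP μ hi0 rfl hA.ne' ((k : ℝ) * fA)
    have h3 := case1_mu hc'ne hatomP μ hi0 rfl r
    rw [h1, h2, h3]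
    simp only [ENNReal.toReal_one, one_mul, sub_self, abs_zero]
    positivity
  -- Case 2: all symbols measurable
  have hAmeas : MeasurableSet (cyl n a) := meas_cyl hsing
  have hP0 : (0:ℝ) < (μ (cyl n a)).toReal := ENNReal.toReal_pos hA.ne' (measure_ne_top μ _)
  have hfA0 : 0 < fA := by rw [hfA]; positivity
  have ht0 : (0:ℝ) ≤ (k : ℝ) * fA := by positivity
  have htr0 : (0:ℝ) ≤ (k : ℝ) * fA + r := by positivity
  set cnp : ℕ := 2 * n + period n (cyl n a) with hcnp
  by_cases hbig : 1 ≤ 2 * ((cnp : ℕ) : ℝ) * (μ (cylLast n w0 a)).toReal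
  · -- trivial regime: ε(A) ≥ 1/2
    set Mv := (μ[|cyl n a] (tauGT (cyl n a) ((k : ℝ) * fA - 2 * n))).toReal with hMv
    have hsub1 : tauGT (cyl n a) ((k : ℝ) * fA + r) ⊆ tauGT (cyl n a) ((k : ℝ) * fA - 2 * n) :=
      tauGT_anti _ (by
        have : (0:ℝ) ≤ 2 * n := by positivity
        linarith)
    have hsub2 : tauGT (cyl n a) ((k : ℝ) * fA) ⊆ tauGT (cyl n a) ((k : ℝ) * fA - 2 * n) :=
      tauGT_anti _ (by
        have : (0:ℝ) ≤ 2 * n := by positivity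
        linarith)
    have ha_le : (μ[|cyl n a] (tauGT (cyl n a) ((k : ℝ) * fA + r))).toReal ≤ Mv :=
      cond_mono_toReal hAmeas hsub1
    have hb_le : (μ[|cyl n a] (tauGT (cyl n a) ((k : ℝ) * fA))).toReal ≤ Mv :=
      cond_mono_toReal hAmeas hsub2
    have hc1 : (μ (tauGT (cyl n a) r)).toReal ≤ 1 := by
      have := ENNReal.toReal_mono (by simp) (prob_le_one (μ := μ) (s := tauGT (cyl n a) r))
      simpa using this
    have hc0 : (0:ℝ) ≤ (μ (tauGT (cyl n a) r)).toReal := ENNReal.toReal_nonneg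
    have ha0 : (0:ℝ) ≤ (μ[|cyl n a] (tauGT (cyl n a) ((k : ℝ) * fA + r))).toReal :=
      ENNReal.toReal_nonneg
    have hb0 : (0:ℝ) ≤ (μ[|cyl n a] (tauGT (cyl n a) ((k : ℝ) * fA))).toReal :=
      ENNReal.toReal_nonneg
    have hLHS : |(μ[|cyl n a] (tauGT (cyl n a) ((k : ℝ) * fA + r))).toReal
        - (μ[|cyl n a] (tauGT (cyl n a) ((k : ℝ) * fA))).toReal
            * (μ (tauGT (cyl n a) r)).toReal| ≤ Mv := by
      rw [abs_le]
      constructor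
      · have : (μ[|cyl n a] (tauGT (cyl n a) ((k : ℝ) * fA))).toReal
            * (μ (tauGT (cyl n a) r)).toReal ≤ Mv :=
          le_trans (mul_le_of_le_one_right hb0 hc1) hb_le
        linarith
      · have : (0:ℝ) ≤ (μ[|cyl n a] (tauGT (cyl n a) ((k : ℝ) * fA))).toReal
            * (μ (tauGT (cyl n a) r)).toReal := by positivity
        linarith
    refine le_trans hLHS ?_
    rw [heps]
    nlinarith [mul_le_mul_of_nonneg_right hbig hM0,
      mul_nonneg (hφ0 (nA n (cyl n a) - w0)) hM0]
  · -- main regime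
    push_neg at hbig
    set δ := (μ (cylLast n w0 a)).toReal with hδdef
    have hPδ : (μ (cyl n a)).toReal ≤ δ :=
      ENNReal.toReal_mono (measure_ne_top μ _) (measure_mono (cyl_subset_cylLast n w0 a))
    have hcnp1 : (1:ℝ) ≤ ((cnp:ℕ):ℝ) := by
      have : 1 ≤ cnp := by omega
      exact_mod_cast this
    have h2nlecnp : ((2*n:ℕ):ℝ) ≤ ((cnp:ℕ):ℝ) := by
      have : 2*n ≤ cnp := by omega
      exact_mod_cast this
    have hfA_big : ((cnp:ℕ):ℝ) < fA := by
      rw [hfA, lt_div_iff₀ (by positivity : (0:ℝ) < 2 * (μ (cyl n a)).toReal)]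
      have h1 : 2 * ((cnp:ℕ):ℝ) * (μ (cyl n a)).toReal ≤ 2 * ((cnp:ℕ):ℝ) * δ :=
        mul_le_mul_of_nonneg_left hPδ (by positivity)
      nlinarith
    have htgt : 2 * (n:ℝ) < (k:ℝ) * fA := by
      have h1 : fA ≤ (k:ℝ) * fA := by
        have hk1 : (1:ℝ) ≤ (k:ℝ) := by exact_mod_cast hk
        nlinarith
      have h2 : 2 * (n:ℝ) ≤ ((cnp:ℕ):ℝ) := by
        have := h2nlecnp; push_cast at this ⊢; linarith
      linarith
    set m : ℕ := ⌊(k:ℝ) * fA⌋₊ with hmdef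
    set mr : ℕ := ⌊(k:ℝ) * fA + r⌋₊ with hmrdef
    set R : ℕ := ⌊r⌋₊ with hRdef
    have hm2n : 2 * n ≤ m := by
      apply Nat.le_floor
      push_cast
      linarith
    have hmr1 : m + R ≤ mr := by
      have h1 : (m:ℝ) ≤ (k:ℝ)*fA := Nat.floor_le ht0
      have h2 : (R:ℝ) ≤ r := Nat.floor_le hr0
      apply Nat.le_floor
      push_cast
      linarith
    have hmr2 : mr ≤ m + R + 1 := by
      have h1 : (k:ℝ)*fA < m + 1 := Nat.lt_floor_add_one _
      have h2 : r < (R:ℝ) + 1 := Nat.lt_floor_add_one _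
      have h3 : mr < m + R + 2 := by
        apply (Nat.floor_lt htr0).mpr
        push_cast
        linarith
      omega
    have hfloor2n : ⌊(k:ℝ) * fA - 2 * n⌋₊ = m - 2 * n := by
      have hcast : (2:ℝ) * n = ((2*n : ℕ):ℝ) := by push_cast; ring
      rw [hcast, Nat.floor_sub_natCast]
    have e1 : tauGT (cyl n a) ((k:ℝ)*fA + r) = noHit n a 1 mr := tauGT_eq_noHit n a htr0
    have e2 : tauGT (cyl n a) ((k:ℝ)*fA) = noHit n a 1 m := tauGT_eq_noHit n a ht0
    have e3 : tauGT (cyl n a) r = noHit n a 1 R := tauGT_eq_noHit n a hr0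
    have e4 : tauGT (cyl n a) ((k:ℝ)*fA - 2*(n:ℝ)) = noHit n a 1 (m - 2*n) := by
      rw [tauGT_eq_noHit n a (by linarith : (0:ℝ) ≤ (k:ℝ)*fA - 2*(n:ℝ)), hfloor2n]
    rw [e1, e2, e3, e4, heps]
    set g : ℕ := nA n (cyl n a) - w0 with hgdef
    have hnAn : nA n (cyl n a) ≤ n := nA_le_n hn (cyl n a)
    have hwg : w0 + g ≤ n := by omega
    have hcore := core_est μ hstat φ hmix n hn a hsing hA w0 g m mr R hwg hm2n hmr1 hmr2
    refine le_trans hcore ?_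
    have hng : ((n + g:ℕ):ℝ) ≤ ((cnp:ℕ):ℝ) := by
      have : n + g ≤ cnp := by omega
      exact_mod_cast this
    have hM0' : (0:ℝ) ≤ (μ[|cyl n a] (noHit n a 1 (m - 2*n))).toReal := ENNReal.toReal_nonneg
    have hmono : 2 * (((n + g:ℕ):ℝ) * δ + φ g) ≤ 2 * (((cnp:ℕ):ℝ) * δ + φ g) := by
      have := mul_le_mul_of_nonneg_right hng hδ0
      linarith
    exact mul_le_mul_of_nonneg_right hmono hM0'



end ReturnTimes
end
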